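/- arXiv:1901.02001 — 5 statements merged into one kernel-verified Lean document; each statement's English description precedes it below -/
import Mathlib

section
/- For any μ₁,…,μₙ ∈ [0,1], the n×n matrix M with entries M_{ij} = 1 − |μᵢ − μⱼ| has non-negative determinant. -/
open MeasureTheory Set

private lemma ind_integrable (a : ℝ) :
    Integrable ((Ioc (0:ℝ) a).indicator (1 : ℝ → ℝ)) := by
  rw [integrable_indicator_iff measurableSet_Ioc]
  exact integrableOn_const (by simp [Real.volume_Ioc])

private lemma ind_mul_ind (a b : ℝ) (t : ℝ) :
    (Ioc (0:ℝ) a).indicator (1 : ℝ → ℝ) t * (Ioc (0:ℝ) b).indicator (1 : ℝ → ℝ) t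
      = (Ioc (0:ℝ) (min a b)).indicator (1 : ℝ → ℝ) t := by
  rw [← Pi.mul_apply, ← Set.inter_indicator_one, Set.Ioc_inter_Ioc]
  simp

private lemma min_eq_integral {a b : ℝ} (ha : 0 ≤ a) (hb : 0 ≤ b) :
    min a b = ∫ t, (Ioc (0:ℝ) a).indicator 1 t * (Ioc (0:ℝ) b).indicator 1 t := by
  simp only [ind_mul_ind]
  rw [integral_indicator_one measurableSet_Ioc, Real.volume_real_Ioc_of_le (le_min ha hb)]
  simp [ENNReal.toReal_ofReal (le_min ha hb)]

private lemma gram_min_psd {n : ℕ} (ν : Fin n → ℝ) (hν : ∀ i, 0 ≤ ν i) :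
    Matrix.PosSemidef (Matrix.of fun i j : Fin n => min (ν i) (ν j)) := by
  rw [Matrix.posSemidef_iff_dotProduct_mulVec]
  constructor
  · ext i j
    simp [Matrix.conjTranspose, min_comm]
  · intro x
    set f : Fin n → ℝ → ℝ := fun i => (Ioc (0:ℝ) (ν i)).indicator 1 with hf
    have hprod : ∀ (i j : Fin n) (t : ℝ), (x i * f i t) * (x j * f j t)
        = (x i * x j) * ((Ioc (0:ℝ) (min (ν i) (ν j))).indicator 1 t) := by
      intro i j t
      rw [show (x i * f i t) * (x j * f j t) = (x i * x j) * (f i t * f j t) by ring,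
        hf]
      simp only
      rw [ind_mul_ind]
    have hint : ∀ i j : Fin n, Integrable (fun t => (x i * f i t) * (x j * f j t)) := by
      intro i j
      simp only [hprod]
      exact (ind_integrable _).const_mul _
    have key : dotProduct (star x)
        ((Matrix.of fun i j : Fin n => min (ν i) (ν j)).mulVec x)
        = ∫ t, (∑ i, x i * f i t) ^ 2 := by
      have hpt : ∀ t : ℝ, (∑ i, x i * f i t) ^ 2
          = ∑ i, ∑ j, (x i * f i t) * (x j * f j t) := by
        intro t
        rw [sq, Finset.sum_mul_sum]
      simp only [hpt]
      rw [integral_finset_sum _ (fun i _ => integrable_finset_sum _ (fun j _ => hint i j))]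
      simp only [integral_finset_sum _ (fun j (_ : j ∈ Finset.univ) => hint _ j)]
      simp only [dotProduct, Matrix.mulVec, Matrix.of_apply, star_trivial]
      refine Finset.sum_congr rfl fun i _ => ?_
      rw [Finset.mul_sum]
      refine Finset.sum_congr rfl fun j _ => ?_
      have hmin := min_eq_integral (hν i) (hν j)
      simp only [ind_mul_ind] at hmin
      simp only [hprod, integral_const_mul]
      rw [← hmin]
      ring
    rw [key]
    exact integral_nonneg fun t => sq_nonneg _

theorem moser_lemma_det_nonneg (n : ℕ) (μ : Fin n → ℝ)
    (hμ : ∀ i, μ i ∈ Set.Icc (0 : ℝ) 1) :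
    0 ≤ Matrix.det (Matrix.of fun i j : Fin n => 1 - |μ i - μ j|) := by
  have hdecomp : (Matrix.of fun i j : Fin n => 1 - |μ i - μ j|)
      = (Matrix.of fun i j : Fin n => min (μ i) (μ j))
        + (Matrix.of fun i j : Fin n => min (1 - μ i) (1 - μ j)) := by
    ext i j
    simp only [Matrix.add_apply, Matrix.of_apply]
    rcases le_total (μ i) (μ j) with h | h
    · rw [abs_of_nonpos (by linarith), min_eq_left h, min_eq_right (by linarith)]
      ring
    · rw [abs_of_nonneg (by linarith), min_eq_right h, min_eq_left (by linarith)]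
      ring
  rw [hdecomp]
  have hpsd : Matrix.PosSemidef ((Matrix.of fun i j : Fin n => min (μ i) (μ j))
      + (Matrix.of fun i j : Fin n => min (1 - μ i) (1 - μ j))) :=
    (gram_min_psd μ fun i => (hμ i).1).add
      (gram_min_psd (fun i => 1 - μ i) fun i => by
        show (0:ℝ) ≤ 1 - μ i
        linarith [(hμ i).2])
  exact hpsd.det_nonneg
end

section
/- For any μ₁,…,μₙ ∈ [0,1], the n×n matrix M with entries M_{ij} = 1 − |μᵢ − μⱼ| is positive semi-definite. -/
open MeasureTheory Set

lemma int_iic {a : ℝ} (h0 : 0 ≤ a) (h1 : a ≤ 1) :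
    ∫ t in (0:ℝ)..1, (Iic a).indicator (fun _ => (1:ℝ)) t = a := by
  rw [intervalIntegral.integral_of_le zero_le_one,
    MeasureTheory.integral_indicator measurableSet_Iic,
    MeasureTheory.setIntegral_const, smul_eq_mul, mul_one,
    measureReal_def, Measure.restrict_apply measurableSet_Iic]
  have : Iic a ∩ Ioc 0 1 = Ioc 0 a := by
    ext x; simp [and_comm]; intro h hx; linarith
  rw [this, Real.volume_Ioc]
  simp [h0]

lemma int_ioi {a : ℝ} (h0 : 0 ≤ a) (h1 : a ≤ 1) :
    ∫ t in (0:ℝ)..1, (Ioi a).indicator (fun _ => (1:ℝ)) t = 1 - a := by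
  rw [intervalIntegral.integral_of_le zero_le_one,
    MeasureTheory.integral_indicator measurableSet_Ioi,
    MeasureTheory.setIntegral_const, smul_eq_mul, mul_one,
    measureReal_def, Measure.restrict_apply measurableSet_Ioi]
  have : Ioi a ∩ Ioc 0 1 = Ioc a 1 := by
    ext x; simp; intro h hx; exact lt_of_le_of_lt h0 h
  rw [this, Real.volume_Ioc]
  rw [ENNReal.toReal_ofReal (by linarith)]

lemma ind_int {s : Set ℝ} (hs : MeasurableSet s) :
    IntervalIntegrable (s.indicator fun _ => (1:ℝ)) volume 0 1 := by
  rw [intervalIntegrable_iff_integrableOn_Ioc_of_le zero_le_one]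
  exact ((MeasureTheory.integrableOn_const_iff (C := (1:ℝ))).mpr (Or.inr (by simp [Real.volume_Ioc]))).indicator hs

theorem moser_matrix_psd (n : ℕ) (μ : Fin n → ℝ)
    (hμ : ∀ i, μ i ∈ Set.Icc (0 : ℝ) 1) (c : Fin n → ℝ) :
    0 ≤ ∑ i : Fin n, ∑ j : Fin n, c i * c j * (1 - |μ i - μ j|) := by
  set A : Fin n → ℝ → ℝ := fun i => (Iic (μ i)).indicator (fun _ => (1:ℝ)) with hA
  set B : Fin n → ℝ → ℝ := fun i => (Ioi (μ i)).indicator (fun _ => (1:ℝ)) with hB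
  have hptA : ∀ i j t, A i t * A j t = (Iic (min (μ i) (μ j))).indicator (fun _ => (1:ℝ)) t := by
    intro i j t
    rw [hA]
    simp only
    rw [← Set.inter_indicator_mul, Set.Iic_inter_Iic]
    simp
  have hptB : ∀ i j t, B i t * B j t = (Ioi (max (μ i) (μ j))).indicator (fun _ => (1:ℝ)) t := by
    intro i j t
    rw [hB]
    simp only
    rw [← Set.inter_indicator_mul, Set.Ioi_inter_Ioi]
    simp
  -- each pair's integrand
  have hfun : ∀ i j, (fun t => (c i * A i t) * (c j * A j t) + (c i * B i t) * (c j * B j t))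
      = fun t => c i * c j * ((Iic (min (μ i) (μ j))).indicator (fun _ => (1:ℝ)) t
        + (Ioi (max (μ i) (μ j))).indicator (fun _ => (1:ℝ)) t) := by
    intro i j; funext t
    rw [mul_add, ← hptA i j t, ← hptB i j t]; ring
  have hint : ∀ i j : Fin n, IntervalIntegrable
      (fun t => (c i * A i t) * (c j * A j t) + (c i * B i t) * (c j * B j t)) volume 0 1 := by
    intro i j
    rw [hfun i j]
    exact (((ind_int measurableSet_Iic).add (ind_int measurableSet_Ioi)).const_mul _)
  have hval : ∀ i j : Fin n,
      ∫ t in (0:ℝ)..1, ((c i * A i t) * (c j * A j t) + (c i * B i t) * (c j * B j t))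
        = c i * c j * (1 - |μ i - μ j|) := by
    intro i j
    rw [hfun i j]
    rw [intervalIntegral.integral_const_mul]
    have h1 := (hμ i).1; have h2 := (hμ i).2; have h3 := (hμ j).1; have h4 := (hμ j).2
    rw [intervalIntegral.integral_add (ind_int measurableSet_Iic) (ind_int measurableSet_Ioi)]
    rw [int_iic (le_min h1 h3) (min_le_of_left_le h2),
        int_ioi (le_trans h1 (le_max_left _ _)) (max_le h2 h4)]
    congr 1
    rcases le_total (μ i) (μ j) with h | h
    · rw [abs_of_nonpos (by linarith), min_eq_left h, max_eq_right h]; ring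
    · rw [abs_of_nonneg (by linarith), min_eq_right h, max_eq_left h]; ring
  calc (0:ℝ) ≤ ∫ t in (0:ℝ)..1, ((∑ i, c i * A i t)^2 + (∑ i, c i * B i t)^2) := by
        apply intervalIntegral.integral_nonneg zero_le_one
        intro t _; positivity
    _ = ∑ i : Fin n, ∑ j : Fin n, c i * c j * (1 - |μ i - μ j|) := by
        have : (fun t => (∑ i, c i * A i t)^2 + (∑ i, c i * B i t)^2)
            = fun t => ∑ i : Fin n, ∑ j : Fin n,
              ((c i * A i t) * (c j * A j t) + (c i * B i t) * (c j * B j t)) := by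
          funext t
          rw [sq, sq, Finset.sum_mul_sum, Finset.sum_mul_sum, ← Finset.sum_add_distrib]
          exact Finset.sum_congr rfl fun i _ => (Finset.sum_add_distrib).symm
        rw [this]
        have inner : ∀ i : Fin n, ∫ t in (0:ℝ)..1, ∑ j : Fin n,
            ((c i * A i t) * (c j * A j t) + (c i * B i t) * (c j * B j t))
            = ∑ j : Fin n, c i * c j * (1 - |μ i - μ j|) := fun i =>
          (intervalIntegral.integral_finset_sum (fun j _ => hint i j)).trans
            (Finset.sum_congr rfl fun j _ => hval i j)
        have hintsum : ∀ i : Fin n, IntervalIntegrable (fun t => ∑ j : Fin n,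
            ((c i * A i t) * (c j * A j t) + (c i * B i t) * (c j * B j t))) volume 0 1 := by
          intro i
          have := IntervalIntegrable.sum (μ := volume) (a := (0:ℝ)) (b := 1) Finset.univ
            (f := fun j t => (c i * A i t) * (c j * A j t) + (c i * B i t) * (c j * B j t))
            (fun j _ => hint i j)
          convert this using 1
          · rfl
          · funext t
            simp [Finset.sum_apply]
        exact (intervalIntegral.integral_finset_sum (fun i _ => hintsum i)).trans
          (Finset.sum_congr rfl fun i _ => inner i)
end

section
/- The function k(u,v) = 1 − |u − v| if sign(u) = sign(v), else 0, defined on [−1,1]², is a positive semi-definite kernel: for all n, all α₁,…,αₙ ∈ [−1,1], and all c₁,…,cₙ ∈ ℝ, ∑ᵢ∑ⱼ cᵢcⱼ k(αᵢ,αⱼ) ≥ 0. -/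
open MeasureTheory Set

private lemma vol_inter_unit (a b : ℝ) :
    (volume (Ico a (a+1) ∩ Ico b (b+1))).toReal = max (1 - |a - b|) 0 := by
  rw [Set.Ico_inter_Ico, Real.volume_Ico]
  have hmm : min (a+1) (b+1) - max a b = 1 - |a - b| := by
    rcases le_total a b with h | h
    · rw [min_eq_left (by linarith), max_eq_right h, abs_of_nonpos (by linarith)]; ring
    · rw [min_eq_right (by linarith), max_eq_left h, abs_of_nonneg (by linarith)]; ring
  rw [hmm]
  rcases le_total (1 - |a - b|) 0 with h | h
  · rw [max_eq_right h, ENNReal.ofReal_eq_zero.2 h, ENNReal.toReal_zero]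
  · rw [max_eq_left h, ENNReal.toReal_ofReal h]

private lemma samesign_abs_le (u v : ℝ) (hu : u ∈ Set.Icc (-1 : ℝ) 1)
    (hv : v ∈ Set.Icc (-1 : ℝ) 1) (hs : Real.sign u = Real.sign v) :
    |u - v| ≤ 1 := by
  obtain ⟨hu1, hu2⟩ := hu
  obtain ⟨hv1, hv2⟩ := hv
  rcases lt_trichotomy u 0 with h1 | h1 | h1
  · rcases lt_trichotomy v 0 with h2 | h2 | h2
    · rw [abs_le]; exact ⟨by linarith, by linarith⟩
    · rw [Real.sign_of_neg h1, h2, Real.sign_zero] at hs; norm_num at hs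
    · rw [Real.sign_of_neg h1, Real.sign_of_pos h2] at hs; norm_num at hs
  · subst h1
    rcases lt_trichotomy v 0 with h2 | h2 | h2
    · rw [Real.sign_zero, Real.sign_of_neg h2] at hs; norm_num at hs
    · subst h2; simp
    · rw [Real.sign_zero, Real.sign_of_pos h2] at hs; norm_num at hs
  · rcases lt_trichotomy v 0 with h2 | h2 | h2
    · rw [Real.sign_of_pos h1, Real.sign_of_neg h2] at hs; norm_num at hs
    · rw [Real.sign_of_pos h1, h2, Real.sign_zero] at hs; norm_num at hs
    · rw [abs_le]; exact ⟨by linarith, by linarith⟩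

private lemma sign_vals (x : ℝ) :
    Real.sign x = -1 ∨ Real.sign x = 0 ∨ Real.sign x = 1 := by
  rcases lt_trichotomy x 0 with h | h | h
  · exact Or.inl (Real.sign_of_neg h)
  · subst h; exact Or.inr (Or.inl Real.sign_zero)
  · exact Or.inr (Or.inr (Real.sign_of_pos h))

theorem analogy_kernel_psd (n : ℕ) (α : Fin n → ℝ)
    (hα : ∀ i, α i ∈ Set.Icc (-1 : ℝ) 1) (c : Fin n → ℝ) :
    0 ≤ ∑ i : Fin n, ∑ j : Fin n, c i * c j *
      (if Real.sign (α i) = Real.sign (α j) then 1 - |α i - α j| else 0) := by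
  classical
  set a : Fin n → ℝ := fun i => α i + 10 * Real.sign (α i) with ha
  set g : Fin n → ℝ → ℝ := fun i => (Ico (a i) (a i + 1)).indicator 1 with hg
  -- product of indicators is the indicator of the intersection
  have hprod : ∀ i j, (fun t => g i t * g j t) =
      (Ico (a i) (a i + 1) ∩ Ico (a j) (a j + 1)).indicator (1 : ℝ → ℝ) := by
    intro i j
    funext t
    rw [Set.inter_indicator_one]
    rfl
  have hprodint : ∀ i j, Integrable (fun t => g i t * g j t) := by
    intro i j
    rw [hprod i j]
    exact (integrable_indicator_iff (measurableSet_Ico.inter measurableSet_Ico)).2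
      (integrableOn_const (lt_of_le_of_lt (measure_mono Set.inter_subset_left)
        measure_Ico_lt_top).ne)
  have hint : ∀ i j, ∫ t, g i t * g j t =
      (volume (Ico (a i) (a i + 1) ∩ Ico (a j) (a j + 1))).toReal := by
    intro i j
    rw [hprod i j]
    have := MeasureTheory.integral_indicator_const (1 : ℝ)
      (measurableSet_Ico.inter measurableSet_Ico)
      (μ := volume) (s := Ico (a i) (a i + 1) ∩ Ico (a j) (a j + 1))
    simpa [Measure.real] using this
  -- the kernel equals the measure of the intersection
  have hk : ∀ i j, (if Real.sign (α i) = Real.sign (α j) then 1 - |α i - α j| else 0)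
      = (volume (Ico (a i) (a i + 1) ∩ Ico (a j) (a j + 1))).toReal := by
    intro i j
    rw [vol_inter_unit]
    by_cases hs : Real.sign (α i) = Real.sign (α j)
    · rw [if_pos hs]
      have habs : |α i - α j| ≤ 1 := samesign_abs_le _ _ (hα i) (hα j) hs
      have hdiff : a i - a j = α i - α j := by
        show α i + 10 * Real.sign (α i) - (α j + 10 * Real.sign (α j)) = α i - α j
        rw [hs]; ring
      rw [hdiff, max_eq_left (by linarith)]
    · rw [if_neg hs]
      have hd : |Real.sign (α i) - Real.sign (α j)| ≥ 1 := by
        rcases sign_vals (α i) with h1 | h1 | h1 <;>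
          rcases sign_vals (α j) with h2 | h2 | h2 <;>
          (revert hs; norm_num [h1, h2])
      have hx : |α i - α j| ≤ 2 := by
        have h1 := (hα i).1; have h2 := (hα i).2
        have h3 := (hα j).1; have h4 := (hα j).2
        rw [abs_le]; constructor <;> linarith
      have hkey : |10 * (Real.sign (α i) - Real.sign (α j))|
          ≤ |a i - a j| + |α i - α j| := by
        have : (10 : ℝ) * (Real.sign (α i) - Real.sign (α j))
            = (a i - a j) + (-(α i - α j)) := by
          show _ = (α i + 10 * Real.sign (α i) - (α j + 10 * Real.sign (α j)))
            + (-(α i - α j))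
          ring
        rw [this]
        calc |(a i - a j) + (-(α i - α j))| ≤ |a i - a j| + |(-(α i - α j))| :=
              abs_add_le _ _
          _ = |a i - a j| + |α i - α j| := by rw [abs_neg]
      have h10 : |10 * (Real.sign (α i) - Real.sign (α j))| ≥ 10 := by
        rw [abs_mul, abs_of_nonneg (by norm_num : (0:ℝ) ≤ 10)]
        linarith
      rw [max_eq_right (by linarith)]
  -- rewrite the sum as an integral of a square
  have hsum : ∑ i : Fin n, ∑ j : Fin n, c i * c j *
      (if Real.sign (α i) = Real.sign (α j) then 1 - |α i - α j| else 0)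
      = ∫ t, (∑ i : Fin n, c i * g i t) ^ 2 := by
    have hexp : ∀ t : ℝ, (∑ i : Fin n, c i * g i t) ^ 2
        = ∑ i : Fin n, ∑ j : Fin n, c i * c j * (g i t * g j t) := by
      intro t
      rw [sq, Finset.sum_mul_sum]
      apply Finset.sum_congr rfl; intro i _
      apply Finset.sum_congr rfl; intro j _
      ring
    simp_rw [hexp]
    rw [MeasureTheory.integral_finset_sum]
    · apply Finset.sum_congr rfl; intro i _
      rw [MeasureTheory.integral_finset_sum]
      · apply Finset.sum_congr rfl; intro j _
        rw [MeasureTheory.integral_const_mul, hint i j, hk i j]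
      · intro j _
        exact (hprodint i j).const_mul _
    · intro i _
      exact integrable_finset_sum _ fun j _ => (hprodint i j).const_mul _
  rw [hsum]
  exact integral_nonneg fun t => sq_nonneg _
end

section
/- A symmetric real n×n matrix all of whose principal minors (determinants of principal submatrices) are non-negative is positive semi-definite. -/
open Matrix Finset

private lemma det_piecewise_single (n : ℕ) (M : Matrix (Fin n) (Fin n) ℝ)
    (S : Finset (Fin n)) :
    (Matrix.of (S.piecewise (fun i => Pi.single i (1:ℝ)) (fun i => M i))).det =
      (M.submatrix (fun i : {x : Fin n // ¬ x ∈ S} => (i : Fin n))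
        (fun i : {x : Fin n // ¬ x ∈ S} => (i : Fin n))).det := by
  classical
  rw [← Matrix.det_submatrix_equiv_self (Equiv.sumCompl (fun x : Fin n => x ∈ S))]
  have hB : ((Matrix.of (S.piecewise (fun i => Pi.single i (1:ℝ)) (fun i => M i))).submatrix
        (Equiv.sumCompl (fun x : Fin n => x ∈ S)) (Equiv.sumCompl (fun x : Fin n => x ∈ S)))
      = Matrix.fromBlocks 1 0
          (Matrix.of fun (i : {x : Fin n // ¬ x ∈ S}) (j : {x : Fin n // x ∈ S}) => M i j)
          (M.submatrix (fun i : {x : Fin n // ¬ x ∈ S} => (i : Fin n))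
            (fun i : {x : Fin n // ¬ x ∈ S} => (i : Fin n))) := by
    ext i j
    cases i with
    | inl i =>
      cases j with
      | inl j =>
        simp [Finset.piecewise_eq_of_mem _ _ _ i.2, Pi.single_apply, Matrix.one_apply,
          eq_comm (a := j)]
      | inr j =>
        have : (j : Fin n) ≠ (i : Fin n) := fun h => j.2 (h ▸ i.2)
        simp [Finset.piecewise_eq_of_mem _ _ _ i.2, Pi.single_apply, this]
    | inr i =>
      cases j with
      | inl j => simp [Finset.piecewise_eq_of_notMem _ _ _ i.2]
      | inr j => simp [Finset.piecewise_eq_of_notMem _ _ _ i.2]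
  rw [hB, Matrix.det_fromBlocks_zero₁₂, Matrix.det_one, one_mul]

private lemma det_add_smul_one_pos (n : ℕ) (M : Matrix (Fin n) (Fin n) ℝ)
    (hminors : ∀ S : Finset (Fin n),
      0 ≤ (M.submatrix (fun i : S => (i : Fin n)) (fun i : S => (i : Fin n))).det)
    {t : ℝ} (ht : 0 < t) : 0 < (M + t • 1).det := by
  classical
  -- minors over "not in S" subtypes are nonneg
  have hminors' : ∀ S : Finset (Fin n),
      0 ≤ (M.submatrix (fun i : {x : Fin n // ¬ x ∈ S} => (i : Fin n))
        (fun i : {x : Fin n // ¬ x ∈ S} => (i : Fin n))).det := by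
    intro S
    rw [← Matrix.det_submatrix_equiv_self
      (Equiv.subtypeEquivRight (fun x : Fin n => Finset.mem_compl)
        : {x : Fin n // x ∈ Sᶜ} ≃ {x : Fin n // ¬ x ∈ S})]
    simpa [Matrix.submatrix_submatrix, Equiv.subtypeEquivRight, Equiv.subtypeEquiv, Function.comp_def]
      using hminors Sᶜ
  -- expansion of det over subsets
  have key : (M + t • 1).det = ∑ S : Finset (Fin n),
      t ^ S.card * (M.submatrix (fun i : {x : Fin n // ¬ x ∈ S} => (i : Fin n))
        (fun i : {x : Fin n // ¬ x ∈ S} => (i : Fin n))).det := by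
    have h1 : (M + t • 1).det
        = (Matrix.detRowAlternating ((fun i => (t • (1 : Matrix (Fin n) (Fin n) ℝ)) i)
            + (fun i => M i))) := by
      rw [add_comm]; rfl
    have h3 := (Matrix.detRowAlternating (R := ℝ) (n := Fin n)).toMultilinearMap.map_add_univ
      (fun i => (t • (1 : Matrix (Fin n) (Fin n) ℝ)) i) (fun i => M i)
    rw [h1, ← AlternatingMap.coe_multilinearMap, h3]
    refine Finset.sum_congr rfl fun S _ => ?_
    have h2 : S.piecewise (fun i => (t • (1 : Matrix (Fin n) (Fin n) ℝ)) i) (fun i => M i)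
        = S.piecewise (fun i => t • (S.piecewise (fun i => Pi.single i (1:ℝ)) (fun i => M i)) i)
            (S.piecewise (fun i => Pi.single i (1:ℝ)) (fun i => M i)) := by
      funext i
      by_cases hi : i ∈ S
      · simp only [Finset.piecewise_eq_of_mem _ _ _ hi]
        funext j
        simp [Pi.single_apply, Matrix.one_apply, eq_comm]
      · simp only [Finset.piecewise_eq_of_notMem _ _ _ hi]
    rw [h2, (Matrix.detRowAlternating (R := ℝ) (n := Fin n)).toMultilinearMap.map_piecewise_smul]
    simp only [Finset.prod_const, smul_eq_mul]
    congr 1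
    exact det_piecewise_single n M S
  rw [key]
  have hterm : ∀ S ∈ (Finset.univ : Finset (Finset (Fin n))),
      0 ≤ t ^ S.card * (M.submatrix (fun i : {x : Fin n // ¬ x ∈ S} => (i : Fin n))
        (fun i : {x : Fin n // ¬ x ∈ S} => (i : Fin n))).det :=
    fun S _ => mul_nonneg (pow_nonneg ht.le _) (hminors' S)
  have hempty : IsEmpty {x : Fin n // ¬ x ∈ (Finset.univ : Finset (Fin n))} :=
    ⟨fun x => x.2 (Finset.mem_univ _)⟩
  have huniv : 0 < t ^ (Finset.univ : Finset (Fin n)).card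
      * (M.submatrix (fun i : {x : Fin n // ¬ x ∈ (Finset.univ : Finset (Fin n))} => (i : Fin n))
        (fun i : {x : Fin n // ¬ x ∈ (Finset.univ : Finset (Fin n))} => (i : Fin n))).det := by
    haveI := hempty
    rw [Matrix.det_isEmpty, mul_one]
    exact pow_pos ht _
  calc (0:ℝ) < _ := huniv
    _ ≤ _ := Finset.single_le_sum hterm (Finset.mem_univ _)

theorem psd_of_nonneg_principal_minors (n : ℕ) (M : Matrix (Fin n) (Fin n) ℝ)
    (hsymm : M.IsSymm)
    (hminors : ∀ S : Finset (Fin n),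
      0 ≤ (M.submatrix (fun i : S => (i : Fin n)) (fun i : S => (i : Fin n))).det) :
    M.PosSemidef := by
  classical
  have hHerm : M.IsHermitian := by
    rw [Matrix.IsHermitian]
    simpa [Matrix.IsSymm] using hsymm
  refine hHerm.posSemidef_iff_eigenvalues_nonneg.2 fun i => show (0:ℝ) ≤ _ from ?_
  by_contra h
  push_neg at h
  set t : ℝ := -hHerm.eigenvalues i with ht
  have htpos : 0 < t := by simp [ht]; linarith
  have hdet : 0 < (M + t • 1).det := det_add_smul_one_pos n M hminors htpos
  have hunit : IsUnit (M + t • 1) :=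
    (Matrix.isUnit_iff_isUnit_det _).2 (isUnit_iff_ne_zero.2 hdet.ne')
  have hinj : Function.Injective ((M + t • 1).mulVec) :=
    Matrix.mulVec_injective_iff_isUnit.2 hunit
  have hv : (M + t • 1) *ᵥ ⇑(hHerm.eigenvectorBasis i) = 0 := by
    rw [Matrix.add_mulVec, hHerm.mulVec_eigenvectorBasis, Matrix.smul_mulVec,
      Matrix.one_mulVec, ht, neg_smul, add_neg_cancel]
  have hzero : ⇑(hHerm.eigenvectorBasis i) = 0 := by
    apply hinj
    rw [hv, Matrix.mulVec_zero]
  exact hHerm.eigenvectorBasis.orthonormal.ne_zero i (by ext j; exact congrFun hzero j)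
end

section
/- The analogy kernel on pairs of vectors, k_A((a,b),(c,d)) = (1/d) ∑ᵢ k(aᵢ − bᵢ, cᵢ − dᵢ), where k(u,v) = 1 − |u − v| if sign(u) = sign(v) and 0 otherwise, is a positive semi-definite kernel on ([0,1]^d)². -/
open MeasureTheory Set

noncomputable def AKind (a : ℝ) : ℝ → ℝ := (Set.Ioc (0:ℝ) a).indicator (1 : ℝ → ℝ)

noncomputable def AKfeat (p : ℝ → Prop) [DecidablePred p] (e : ℝ → ℝ) (u : ℝ) : ℝ → ℝ :=
  if p u then AKind (e u) else 0

lemma AKind_mul (a b : ℝ) :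
    (fun t => AKind a t * AKind b t) = AKind (min a b) := by
  funext t
  have h := Set.inter_indicator_mul (s := Set.Ioc (0:ℝ) a) (t := Set.Ioc (0:ℝ) b)
    (fun _ : ℝ => (1:ℝ)) (fun _ : ℝ => (1:ℝ)) t
  simpa [AKind, Set.Ioc_inter_Ioc, Pi.one_def] using h.symm

lemma AKind_integrable (a : ℝ) :
    IntegrableOn (AKind a) (Set.Ioc (0:ℝ) 1) := by
  refine (integrable_indicator_iff measurableSet_Ioc).2 ?_
  rw [IntegrableOn, Measure.restrict_restrict measurableSet_Ioc]
  refine integrableOn_const (lt_top_iff_ne_top.1 ?_)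
  refine (measure_mono Set.inter_subset_right).trans_lt ?_
  simp [Real.volume_Ioc]

lemma AKfeat_prod_integrable (p : ℝ → Prop) [DecidablePred p] (e : ℝ → ℝ) (u v : ℝ) :
    IntegrableOn (fun t => AKfeat p e u t * AKfeat p e v t) (Set.Ioc (0:ℝ) 1) := by
  unfold AKfeat
  split_ifs with h1 h2 h2
  · rw [AKind_mul]; exact AKind_integrable _
  all_goals simpa using (integrableOn_const (C := (0:ℝ))).2 (Or.inl rfl)

lemma AKintegral_ind (a b : ℝ) (ha : a ≤ 1) (hb : b ≤ 1) :
    (∫ t in Set.Ioc (0:ℝ) 1, AKind a t * AKind b t) = max (min a b) 0 := by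
  rw [AKind_mul]
  unfold AKind
  rw [MeasureTheory.integral_indicator_one measurableSet_Ioc, measureReal_def,
    Measure.restrict_apply measurableSet_Ioc, Set.Ioc_inter_Ioc]
  have hm : min (min a b) 1 = min a b := min_eq_left (le_trans (min_le_left a b) ha)
  rw [max_self, hm, Real.volume_Ioc, sub_zero, ENNReal.toReal_ofReal']

lemma AKquad_nonneg {n : ℕ} (c : Fin n → ℝ) (f : Fin n → ℝ → ℝ)
    (h : ∀ i j, IntegrableOn (fun t => f i t * f j t) (Set.Ioc (0:ℝ) 1)) :
    0 ≤ ∑ i : Fin n, ∑ j : Fin n, c i * c j * ∫ t in Set.Ioc (0:ℝ) 1, f i t * f j t := by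
  have hint : ∀ i j : Fin n,
      Integrable (fun t => c i * f i t * (c j * f j t)) (volume.restrict (Set.Ioc (0:ℝ) 1)) := by
    intro i j
    have := ((h i j).const_mul (c i * c j))
    refine this.congr ?_
    refine Filter.Eventually.of_forall (fun t => ?_)
    ring
  have key : ∑ i : Fin n, ∑ j : Fin n, c i * c j * ∫ t in Set.Ioc (0:ℝ) 1, f i t * f j t
      = ∫ t in Set.Ioc (0:ℝ) 1, (∑ i : Fin n, c i * f i t)^2 := by
    have h1 : ∀ i j : Fin n, c i * c j * (∫ t in Set.Ioc (0:ℝ) 1, f i t * f j t)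
        = ∫ t in Set.Ioc (0:ℝ) 1, (c i * f i t) * (c j * f j t) := by
      intro i j
      rw [show (fun t => c i * f i t * (c j * f j t)) = fun t => (c i * c j) * (f i t * f j t) by
        funext t; ring]
      rw [MeasureTheory.integral_const_mul]
    simp_rw [h1]
    have h2 : ∀ i : Fin n, ∑ j : Fin n, ∫ t in Set.Ioc (0:ℝ) 1, (c i * f i t) * (c j * f j t)
        = ∫ t in Set.Ioc (0:ℝ) 1, ∑ j : Fin n, (c i * f i t) * (c j * f j t) := by
      intro i
      exact (MeasureTheory.integral_finset_sum _ (fun j _ => hint i j)).symm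
    simp_rw [h2]
    rw [← MeasureTheory.integral_finset_sum _ (fun i _ =>
      integrable_finset_sum _ (fun j _ => hint i j))]
    congr 1
    funext t
    rw [sq, Finset.sum_mul_sum]
  rw [key]
  exact MeasureTheory.integral_nonneg (fun t => sq_nonneg _)

noncomputable def AKz (u : ℝ) : ℝ := if u = 0 then 1 else 0

noncomputable def AKf1 : ℝ → ℝ → ℝ := AKfeat (fun u => 0 < u) (fun u => u)
noncomputable def AKf2 : ℝ → ℝ → ℝ := AKfeat (fun u => 0 < u) (fun u => 1 - u)
noncomputable def AKf3 : ℝ → ℝ → ℝ := AKfeat (fun u => u < 0) (fun u => -u)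
noncomputable def AKf4 : ℝ → ℝ → ℝ := AKfeat (fun u => u < 0) (fun u => 1 + u)

lemma AKmin_add (a b : ℝ) (ha0 : 0 ≤ a) (ha1 : a ≤ 1) (hb0 : 0 ≤ b) (hb1 : b ≤ 1) :
    max (min a b) 0 + max (min (1 - a) (1 - b)) 0 = 1 - |a - b| := by
  rcases le_total a b with h | h
  · rw [min_eq_left h, min_eq_right (by linarith), max_eq_left ha0,
      max_eq_left (by linarith), abs_of_nonpos (by linarith)]
    ring
  · rw [min_eq_right h, min_eq_left (by linarith), max_eq_left hb0,
      max_eq_left (by linarith), abs_of_nonneg (by linarith)]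
    ring

lemma AKdecomp (u v : ℝ) (hu : u ∈ Set.Icc (-1:ℝ) 1) (hv : v ∈ Set.Icc (-1:ℝ) 1) :
    (if Real.sign u = Real.sign v then 1 - |u - v| else 0)
      = (∫ t in Set.Ioc (0:ℝ) 1, AKf1 u t * AKf1 v t)
        + (∫ t in Set.Ioc (0:ℝ) 1, AKf2 u t * AKf2 v t)
        + (∫ t in Set.Ioc (0:ℝ) 1, AKf3 u t * AKf3 v t)
        + (∫ t in Set.Ioc (0:ℝ) 1, AKf4 u t * AKf4 v t)
        + AKz u * AKz v := by
  obtain ⟨hu1, hu2⟩ := hu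
  obtain ⟨hv1, hv2⟩ := hv
  rcases lt_trichotomy u 0 with hu0 | hu0 | hu0 <;> rcases lt_trichotomy v 0 with hv0 | hv0 | hv0
  · -- u < 0, v < 0
    rw [if_pos (by rw [Real.sign_of_neg hu0, Real.sign_of_neg hv0])]
    simp only [AKf1, AKf2, AKf3, AKf4, AKfeat, if_neg (not_lt.2 hu0.le), if_pos hu0,
      if_neg (not_lt.2 hv0.le), if_pos hv0, AKz, if_neg hu0.ne, Pi.zero_apply,
      zero_mul, mul_zero, integral_zero, add_zero, zero_add]
    rw [AKintegral_ind _ _ (by linarith) (by linarith),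
      AKintegral_ind _ _ (by linarith) (by linarith)]
    have := AKmin_add (-u) (-v) (by linarith) (by linarith) (by linarith) (by linarith)
    rw [show (1:ℝ) - -u = 1 + u by ring, show (1:ℝ) - -v = 1 + v by ring] at this
    rw [this, show -u - -v = -(u - v) by ring, abs_neg]
  · -- u < 0, v = 0
    subst hv0
    rw [if_neg (by rw [Real.sign_of_neg hu0, Real.sign_zero]; norm_num)]
    simp [AKf1, AKf2, AKf3, AKf4, AKfeat, AKz, if_neg (not_lt.2 hu0.le), if_pos hu0,
      if_neg hu0.ne, lt_irrefl]
  · -- u < 0, v > 0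
    rw [if_neg (by rw [Real.sign_of_neg hu0, Real.sign_of_pos hv0]; norm_num)]
    simp [AKf1, AKf2, AKf3, AKf4, AKfeat, AKz, if_neg (not_lt.2 hu0.le), if_pos hu0,
      if_neg (not_lt.2 hv0.le), if_pos hv0, hu0.ne, hv0.ne']
  · -- u = 0, v < 0
    subst hu0
    rw [if_neg (by rw [Real.sign_of_neg hv0, Real.sign_zero]; norm_num)]
    simp [AKf1, AKf2, AKf3, AKf4, AKfeat, AKz, if_neg hv0.ne, lt_irrefl]
  · -- u = 0, v = 0
    subst hu0; subst hv0
    rw [if_pos rfl]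
    simp [AKf1, AKf2, AKf3, AKf4, AKfeat, AKz, lt_irrefl]
  · -- u = 0, v > 0
    subst hu0
    rw [if_neg (by rw [Real.sign_of_pos hv0, Real.sign_zero]; norm_num)]
    simp [AKf1, AKf2, AKf3, AKf4, AKfeat, AKz, hv0.ne', lt_irrefl]
  · -- u > 0, v < 0
    rw [if_neg (by rw [Real.sign_of_pos hu0, Real.sign_of_neg hv0]; norm_num)]
    simp [AKf1, AKf2, AKf3, AKf4, AKfeat, AKz, if_pos hu0, if_neg (not_lt.2 hu0.le),
      if_neg (not_lt.2 hv0.le), if_pos hv0, hu0.ne', hv0.ne]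
  · -- u > 0, v = 0
    subst hv0
    rw [if_neg (by rw [Real.sign_of_pos hu0, Real.sign_zero]; norm_num)]
    simp [AKf1, AKf2, AKf3, AKf4, AKfeat, AKz, if_pos hu0, if_neg (not_lt.2 hu0.le),
      hu0.ne', lt_irrefl]
  · -- u > 0, v > 0
    rw [if_pos (by rw [Real.sign_of_pos hu0, Real.sign_of_pos hv0])]
    simp only [AKf1, AKf2, AKf3, AKf4, AKfeat, if_pos hu0, if_pos hv0,
      if_neg (not_lt.2 hu0.le), if_neg (not_lt.2 hv0.le), AKz, if_neg hu0.ne',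
      Pi.zero_apply, zero_mul, mul_zero, integral_zero, add_zero]
    rw [AKintegral_ind _ _ hu2 hv2, AKintegral_ind _ _ (by linarith) (by linarith)]
    exact (AKmin_add u v hu0.le hu2 hv0.le hv2).symm

lemma AKcoord_psd {n : ℕ} (c : Fin n → ℝ) (u : Fin n → ℝ)
    (hu : ∀ i, u i ∈ Set.Icc (-1:ℝ) 1) :
    0 ≤ ∑ i : Fin n, ∑ j : Fin n, c i * c j *
      (if Real.sign (u i) = Real.sign (u j) then 1 - |u i - u j| else 0) := by
  have hdec : ∀ i j : Fin n, c i * c j *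
      (if Real.sign (u i) = Real.sign (u j) then 1 - |u i - u j| else 0)
      = c i * c j * (∫ t in Set.Ioc (0:ℝ) 1, AKf1 (u i) t * AKf1 (u j) t)
        + c i * c j * (∫ t in Set.Ioc (0:ℝ) 1, AKf2 (u i) t * AKf2 (u j) t)
        + c i * c j * (∫ t in Set.Ioc (0:ℝ) 1, AKf3 (u i) t * AKf3 (u j) t)
        + c i * c j * (∫ t in Set.Ioc (0:ℝ) 1, AKf4 (u i) t * AKf4 (u j) t)
        + (c i * AKz (u i)) * (c j * AKz (u j)) := by
    intro i j
    rw [AKdecomp (u i) (u j) (hu i) (hu j)]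
    ring
  simp_rw [hdec, Finset.sum_add_distrib]
  have q1 := AKquad_nonneg c (fun i => AKf1 (u i))
    (fun i j => AKfeat_prod_integrable _ _ (u i) (u j))
  have q2 := AKquad_nonneg c (fun i => AKf2 (u i))
    (fun i j => AKfeat_prod_integrable _ _ (u i) (u j))
  have q3 := AKquad_nonneg c (fun i => AKf3 (u i))
    (fun i j => AKfeat_prod_integrable _ _ (u i) (u j))
  have q4 := AKquad_nonneg c (fun i => AKf4 (u i))
    (fun i j => AKfeat_prod_integrable _ _ (u i) (u j))
  have q5 : 0 ≤ ∑ i : Fin n, ∑ j : Fin n, (c i * AKz (u i)) * (c j * AKz (u j)) := by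
    rw [← Finset.sum_mul_sum]
    exact mul_self_nonneg _
  positivity

theorem analogy_kernel_on_vectors_psd (d : ℕ) (hd : 0 < d)
    (n : ℕ) (x : Fin n → (Fin d → ℝ) × (Fin d → ℝ))
    (hx : ∀ i : Fin n, (∀ l, (x i).1 l ∈ Set.Icc (0 : ℝ) 1) ∧
      (∀ l, (x i).2 l ∈ Set.Icc (0 : ℝ) 1))
    (c : Fin n → ℝ) :
    0 ≤ ∑ i : Fin n, ∑ j : Fin n, c i * c j *
      ((1 / (d : ℝ)) * ∑ l : Fin d,
        if Real.sign ((x i).1 l - (x i).2 l) = Real.sign ((x j).1 l - (x j).2 l)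
        then 1 - |((x i).1 l - (x i).2 l) - ((x j).1 l - (x j).2 l)|
        else 0) := by
  set K : Fin n → Fin n → Fin d → ℝ := fun i j l =>
    if Real.sign ((x i).1 l - (x i).2 l) = Real.sign ((x j).1 l - (x j).2 l)
    then 1 - |((x i).1 l - (x i).2 l) - ((x j).1 l - (x j).2 l)|
    else 0 with hK
  have key : ∑ i : Fin n, ∑ j : Fin n, c i * c j * ((1 / (d : ℝ)) * ∑ l : Fin d, K i j l)
      = (1 / (d : ℝ)) * ∑ l : Fin d, ∑ i : Fin n, ∑ j : Fin n, c i * c j * K i j l := by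
    calc ∑ i : Fin n, ∑ j : Fin n, c i * c j * ((1 / (d : ℝ)) * ∑ l : Fin d, K i j l)
        = ∑ i : Fin n, ∑ j : Fin n, ∑ l : Fin d, (1 / (d : ℝ)) * (c i * c j * K i j l) := by
          refine Finset.sum_congr rfl fun i _ => Finset.sum_congr rfl fun j _ => ?_
          rw [Finset.mul_sum, Finset.mul_sum]
          exact Finset.sum_congr rfl fun l _ => by ring
      _ = ∑ i : Fin n, ∑ l : Fin d, ∑ j : Fin n, (1 / (d : ℝ)) * (c i * c j * K i j l) :=
          Finset.sum_congr rfl fun i _ => Finset.sum_comm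
      _ = ∑ l : Fin d, ∑ i : Fin n, ∑ j : Fin n, (1 / (d : ℝ)) * (c i * c j * K i j l) :=
          Finset.sum_comm
      _ = (1 / (d : ℝ)) * ∑ l : Fin d, ∑ i : Fin n, ∑ j : Fin n, c i * c j * K i j l := by
          rw [Finset.mul_sum]
          refine Finset.sum_congr rfl fun l _ => ?_
          rw [Finset.mul_sum]
          refine Finset.sum_congr rfl fun i _ => ?_
          rw [Finset.mul_sum]
  rw [key]
  refine mul_nonneg (by positivity) (Finset.sum_nonneg (fun l _ => ?_))
  refine AKcoord_psd c (fun i => (x i).1 l - (x i).2 l) (fun i => ?_)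
  obtain ⟨h1, h2⟩ := hx i
  obtain ⟨a1, a2⟩ := h1 l
  obtain ⟨b1, b2⟩ := h2 l
  constructor <;> linarith
end
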